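/- arXiv:1901.06642 — 5 statements merged into one kernel-verified Lean document; each statement's English description precedes it below -/
import Mathlib

section
/- Let f = h + conj(g) be a sense-preserving harmonic diffeomorphism of the upper half-plane U onto itself with f(i) = b, which extends continuously to the closed upper half-plane. Then Im f(z) = (Im b)·Im z for all z ∈ U, and there is a holomorphic function a : U → {Re w > 0} such that h'(z) = (a(z) + Im b)/2 and g'(z) = (a(z) − Im b)/2. -/
set_option autoImplicit false
set_option maxHeartbeats 1000000

open Complex Set

section Aux
open Metric Filter

lemma norm_sq_eq (x : ℂ) : ‖x‖^2 = x.re^2 + x.im^2 := by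
  rw [Complex.sq_norm, Complex.normSq_apply]; ring

lemma sub_conj_sq (a w : ℂ) :
    ‖a - (starRingEnd ℂ) w‖^2 = ‖a - w‖^2 + 4 * (a.im * w.im) := by
  simp only [norm_sq_eq, Complex.sub_re, Complex.sub_im, Complex.conj_re, Complex.conj_im]
  ring

lemma sp_ineq {φ : ℂ → ℂ} (hφ : DifferentiableOn ℂ φ {z : ℂ | 0 < z.im})
    (hm : ∀ z : ℂ, 0 < z.im → 0 < (φ z).im) {z w : ℂ} (hz : 0 < z.im) (hw : 0 < w.im) :
    ‖φ z - φ w‖^2 * (z.im * w.im) ≤ ‖z - w‖^2 * ((φ z).im * (φ w).im) := by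
  set cw := (starRingEnd ℂ) w with hcw
  have hvim : ∀ a v : ℂ, 0 < a.im → 0 < v.im → ‖a - (starRingEnd ℂ) v‖ ≠ 0 := by
    intro a v ha hv h0
    have h1 : a - (starRingEnd ℂ) v = 0 := norm_eq_zero.mp h0
    have : (a - (starRingEnd ℂ) v).im = 0 := by rw [h1]; simp
    simp [Complex.sub_im, Complex.conj_im] at this
    linarith
  -- the Cayley-type maps
  set T : ℂ → ℂ := fun a => (a - w) / (a - cw) with hT
  set S : ℂ → ℂ := fun ζ => (w - cw * ζ) / (1 - ζ) with hS
  set Tp : ℂ → ℂ := fun a => (a - φ w) / (a - (starRingEnd ℂ) (φ w)) with hTp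
  have hTnorm : ∀ a : ℂ, 0 < a.im → ‖T a‖ < 1 := by
    intro a ha
    have hden : ‖a - cw‖ ≠ 0 := hvim a w ha hw
    have hdenpos : 0 < ‖a - cw‖ := lt_of_le_of_ne (norm_nonneg _) (Ne.symm hden)
    rw [hT]; simp only
    rw [norm_div, div_lt_one hdenpos]
    have h1 : ‖a - cw‖^2 = ‖a - w‖^2 + 4 * (a.im * w.im) := sub_conj_sq a w
    nlinarith [norm_nonneg (a - w), norm_nonneg (a - cw), mul_pos ha hw]
  have hTpnorm : ∀ a : ℂ, 0 < a.im → ‖Tp a‖ < 1 := by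
    intro a ha
    have hden : ‖a - (starRingEnd ℂ) (φ w)‖ ≠ 0 := hvim a (φ w) ha (hm w hw)
    have hdenpos : 0 < ‖a - (starRingEnd ℂ) (φ w)‖ := lt_of_le_of_ne (norm_nonneg _) (Ne.symm hden)
    rw [hTp]; simp only
    rw [norm_div, div_lt_one hdenpos]
    have h1 : ‖a - (starRingEnd ℂ) (φ w)‖^2 = ‖a - φ w‖^2 + 4 * (a.im * (φ w).im) :=
      sub_conj_sq a (φ w)
    nlinarith [norm_nonneg (a - φ w), norm_nonneg (a - (starRingEnd ℂ) (φ w)),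
      mul_pos ha (hm w hw)]
  have hSim : ∀ ζ : ℂ, ‖ζ‖ < 1 → 0 < (S ζ).im := by
    intro ζ hζ
    have hden : (1 : ℂ) - ζ ≠ 0 := by
      intro h0
      have : ζ = 1 := by linear_combination -h0
      rw [this] at hζ; norm_num at hζ
    have hns : 0 < Complex.normSq (1 - ζ) := Complex.normSq_pos.mpr hden
    rw [hS]; simp only
    rw [Complex.div_im]
    have hnum : (w - cw * ζ).im * (1 - ζ).re - (w - cw * ζ).re * (1 - ζ).im
        = w.im * (1 - Complex.normSq ζ) := by
      simp [hcw, Complex.sub_re, Complex.sub_im, Complex.mul_re, Complex.mul_im,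
        Complex.conj_re, Complex.conj_im, Complex.normSq_apply, Complex.one_re, Complex.one_im]
      ring
    have hζsq : Complex.normSq ζ < 1 := by
      have := norm_sq_eq ζ
      rw [Complex.normSq_apply]
      nlinarith [norm_nonneg ζ]
    rw [div_sub_div_same]
    apply div_pos
    · rw [hnum]; nlinarith
    · exact hns
  -- S inverts T on the upper half plane
  have hwne : w - cw ≠ 0 := by
    intro h0
    have : (w - cw).im = 0 := by rw [h0]; simp
    simp [hcw, Complex.sub_im, Complex.conj_im] at this
    linarith
  have hST : S (T z) = z := by
    have hzden : z - cw ≠ 0 := by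
      intro h0
      have : (z - cw).im = 0 := by rw [h0]; simp
      simp [hcw, Complex.sub_im, Complex.conj_im] at this
      linarith
    have h1T : (1 : ℂ) - T z ≠ 0 := by
      rw [hT]; simp only
      rw [sub_ne_zero]
      intro h0
      have := (div_eq_one_iff_eq hzden).mp h0.symm
      have : w = cw := by linear_combination -this
      exact hwne (by rw [this]; ring)
    rw [hS, hT]; simp only
    rw [div_eq_iff h1T]
    have h2 : (z - w) / (z - cw) * (z - cw) = z - w := div_mul_cancel₀ _ hzden
    apply mul_right_cancel₀ hzden
    show (w - cw * ((z - w) / (z - cw))) * (z - cw) = z * (1 - (z - w) / (z - cw)) * (z - cw)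
    linear_combination (z - cw) * h2
  -- differentiability of the composition
  have hSd : DifferentiableOn ℂ S (ball (0:ℂ) 1) := by
    apply DifferentiableOn.div
    · exact (differentiableOn_const _).sub ((differentiableOn_const _).mul differentiableOn_id)
    · exact (differentiableOn_const _).sub differentiableOn_id
    · intro ζ hζ
      rw [mem_ball, dist_zero_right] at hζ
      intro h0
      have : ζ = 1 := by linear_combination -h0
      rw [this] at hζ; norm_num at hζ
  have hSmem : ∀ ζ ∈ ball (0:ℂ) 1, S ζ ∈ {z : ℂ | 0 < z.im} := by
    intro ζ hζ
    rw [mem_ball, dist_zero_right] at hζ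
    exact hSim ζ hζ
  have hφS : DifferentiableOn ℂ (fun ζ => φ (S ζ)) (ball (0:ℂ) 1) :=
    hφ.comp hSd hSmem
  have hFd : DifferentiableOn ℂ (fun ζ => Tp (φ (S ζ))) (ball (0:ℂ) 1) := by
    rw [hTp]; simp only
    apply DifferentiableOn.div
    · exact hφS.sub (differentiableOn_const _)
    · exact hφS.sub (differentiableOn_const _)
    · intro ζ hζ
      have him : 0 < (φ (S ζ)).im := hm _ (hSmem ζ hζ)
      intro h0
      have := hvim (φ (S ζ)) (φ w) him (hm w hw)
      exact this (by rw [h0, norm_zero])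
  have hS0 : S 0 = w := by rw [hS]; simp
  have hF0 : Tp (φ (S 0)) = 0 := by
    rw [hS0, hTp]; simp only
    rw [div_eq_zero_iff]; left; ring
  have hmaps : MapsTo (fun ζ => Tp (φ (S ζ))) (ball (0:ℂ) 1) (ball (Tp (φ (S 0))) 1) := by
    intro ζ hζ
    rw [hF0, mem_ball, dist_zero_right]
    exact hTpnorm _ (hm _ (hSmem ζ hζ))
  have hTz : T z ∈ ball (0:ℂ) 1 := by
    rw [mem_ball, dist_zero_right]; exact hTnorm z hz
  have key := dist_le_div_mul_dist_of_mapsTo_ball hFd (hmaps.mono_right ball_subset_closedBall) hTz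
  rw [hF0] at key
  simp only [dist_zero_right, hST] at key
  rw [div_self (by norm_num : (1:ℝ) ≠ 0), one_mul] at key
  -- key : ‖Tp (φ z)‖ ≤ ‖T z‖
  have hzden : 0 < ‖z - cw‖ :=
    lt_of_le_of_ne (norm_nonneg _) (Ne.symm (hvim z w hz hw))
  have hpden : 0 < ‖φ z - (starRingEnd ℂ) (φ w)‖ :=
    lt_of_le_of_ne (norm_nonneg _) (Ne.symm (hvim (φ z) (φ w) (hm z hz) (hm w hw)))
  have key2 : ‖φ z - φ w‖^2 * ‖z - cw‖^2 ≤ ‖z - w‖^2 * ‖φ z - (starRingEnd ℂ) (φ w)‖^2 := by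
    have h1 : ‖Tp (φ z)‖ = ‖φ z - φ w‖ / ‖φ z - (starRingEnd ℂ) (φ w)‖ := by
      rw [hTp]; simp only [norm_div]
    have h2 : ‖T z‖ = ‖z - w‖ / ‖z - cw‖ := by
      rw [hT]; simp only [norm_div]
    rw [h1, h2, div_le_div_iff₀ hpden hzden] at key
    nlinarith [norm_nonneg (φ z - φ w), norm_nonneg (z - w),
      mul_nonneg (norm_nonneg (φ z - φ w)) (norm_nonneg (z - cw)),
      mul_nonneg (norm_nonneg (z - w)) (norm_nonneg (φ z - (starRingEnd ℂ) (φ w)))]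
  have e1 : ‖z - cw‖^2 = ‖z - w‖^2 + 4 * (z.im * w.im) := sub_conj_sq z w
  have e2 : ‖φ z - (starRingEnd ℂ) (φ w)‖^2 = ‖φ z - φ w‖^2 + 4 * ((φ z).im * (φ w).im) :=
    sub_conj_sq (φ z) (φ w)
  nlinarith [key2]

lemma harnack_ineq {φ : ℂ → ℂ} (hφ : DifferentiableOn ℂ φ {z : ℂ | 0 < z.im})
    (hm : ∀ z : ℂ, 0 < z.im → 0 < (φ z).im) {z w : ℂ} (hz : 0 < z.im) (hw : 0 < w.im) :
    (φ w).im * (z.im * w.im) ≤ (φ z).im * (‖z - w‖^2 + 2 * (z.im * w.im)) := by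
  have key := sp_ineq hφ hm hz hw
  have him : ((φ z).im - (φ w).im)^2 ≤ ‖φ z - φ w‖^2 := by
    have h1 : |(φ z - φ w).im| ≤ ‖φ z - φ w‖ := by
      exact Complex.abs_im_le_norm _
    have h2 : (φ z - φ w).im = (φ z).im - (φ w).im := by simp [Complex.sub_im]
    have h3 : |(φ z - φ w).im| * |(φ z - φ w).im| ≤ ‖φ z - φ w‖ * ‖φ z - φ w‖ :=
      mul_self_le_mul_self (abs_nonneg _) h1
    rw [abs_mul_abs_self, h2] at h3
    nlinarith [h3]
  have hkey2 : ((φ z).im - (φ w).im)^2 * (z.im * w.im) ≤ ‖z - w‖^2 * ((φ z).im * (φ w).im) := by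
    nlinarith [mul_pos hz hw]
  have ha : 0 < (φ z).im := hm z hz
  have hb : 0 < (φ w).im := hm w hw
  have hzw : 0 < z.im * w.im := mul_pos hz hw
  nlinarith [mul_pos hb hzw, mul_pos ha hzw, sq_nonneg ((φ z).im - (φ w).im),
    mul_pos (mul_pos ha hb) hzw]
lemma harnack_vert {φ : ℂ → ℂ} (hφ : DifferentiableOn ℂ φ {z : ℂ | 0 < z.im})
    (hm : ∀ z : ℂ, 0 < z.im → 0 < (φ z).im) {z : ℂ} (hz : 0 < z.im) {y : ℝ} (hy : 0 < y) :
    (φ ((y:ℂ) * Complex.I)).im * (z.im * y) ≤ (φ z).im * (‖z‖^2 + y^2) := by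
  have hw : (0:ℝ) < ((y:ℂ) * Complex.I).im := by simp [hy]
  have key := harnack_ineq hφ hm hz hw
  have h1 : ((y:ℂ) * Complex.I).im = y := by simp
  have h2 : ‖z - (y:ℂ) * Complex.I‖^2 = ‖z‖^2 - 2*y*z.im + y^2 := by
    rw [norm_sq_eq, norm_sq_eq]
    simp [Complex.sub_re, Complex.sub_im, Complex.mul_re, Complex.mul_im]
    ring
  rw [h1, h2] at key
  nlinarith [key]
lemma harnack_arc {φ : ℂ → ℂ} (hφ : DifferentiableOn ℂ φ {z : ℂ | 0 < z.im})
    (hm : ∀ z : ℂ, 0 < z.im → 0 < (φ z).im) {w : ℂ} (hw : 0 < w.im) {R : ℝ} (hR : 0 < R)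
    (hwR : ‖w‖ = R) :
    (φ w).im * w.im ≤ 2 * R * (φ ((R:ℂ) * Complex.I)).im := by
  have hz : (0:ℝ) < ((R:ℂ) * Complex.I).im := by simp [hR]
  have key := harnack_ineq hφ hm hz hw
  have h1 : ((R:ℂ) * Complex.I).im = R := by simp
  have h2 : ‖(R:ℂ) * Complex.I - w‖^2 = R^2 + R^2 - 2*R*w.im := by
    rw [norm_sq_eq]
    have h3 : ‖w‖^2 = R^2 := by rw [hwR]
    rw [norm_sq_eq] at h3
    simp [Complex.sub_re, Complex.sub_im, Complex.mul_re, Complex.mul_im]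
    nlinarith [h3]
  rw [h1, h2] at key
  have hphiz : 0 < (φ ((R:ℂ) * Complex.I)).im := hm _ hz
  nlinarith [key, mul_pos hR hw]

end Aux

section Main
open Metric Filter

/-- Structure theorem: a sense-preserving harmonic diffeomorphism
`f = h + conj g` of the upper half-plane onto itself with `f i = b`, extending
continuously to the closed half-plane with real boundary values, satisfies
`Im f(z) = (Im b)·Im z`, and there is a holomorphic `a` with values in the
right half-plane such that `h' = (a + Im b)/2` and `g' = (a − Im b)/2`. -/
theorem harmonic_diffeo_halfplane_structure
    (U : Set ℂ) (hU : U = {z : ℂ | 0 < z.im})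
    (h g f finv F : ℂ → ℂ)
    (hh : DifferentiableOn ℂ h U) (hg : DifferentiableOn ℂ g U)
    (hf : ∀ z ∈ U, f z = h z + (starRingEnd ℂ) (g z))
    (hsense : ∀ z ∈ U, ‖deriv g z‖ < ‖deriv h z‖)
    (hbij : Set.BijOn f U U)
    (hinv : Set.InvOn finv f U U) (hinvc : ContinuousOn finv U)
    (hFcont : ContinuousOn F {z : ℂ | 0 ≤ z.im})
    (hFeq : Set.EqOn F f U)
    (hFreal : ∀ x : ℝ, (F (x : ℂ)).im = 0)
    (b : ℂ) (hb : b ∈ U) (hfi : f Complex.I = b) :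
    (∀ z ∈ U, (f z).im = b.im * z.im) ∧
      ∃ a : ℂ → ℂ, DifferentiableOn ℂ a U ∧ (∀ z ∈ U, 0 < (a z).re) ∧
        ∀ z ∈ U, deriv h z = (a z + (b.im : ℂ)) / 2 ∧
          deriv g z = (a z - (b.im : ℂ)) / 2 := by
  subst hU
  set UH := {z : ℂ | 0 < z.im} with hUH
  have hUopen : IsOpen UH := isOpen_lt continuous_const Complex.continuous_im
  have hIU : Complex.I ∈ UH := by simp [hUH]
  set φ : ℂ → ℂ := fun z => h z - g z with hφ
  have hφd : DifferentiableOn ℂ φ UH := hh.sub hg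
  have him : ∀ z ∈ UH, (φ z).im = (f z).im := by
    intro z hz
    rw [hf z hz, hφ]
    simp only [Complex.add_im, Complex.conj_im, Complex.sub_im]
    ring
  have hφm : ∀ z : ℂ, 0 < z.im → 0 < (φ z).im := by
    intro z hz
    rw [him z hz]
    exact hbij.mapsTo hz
  -- the liminf slope at infinity
  set ratio : ℝ → ℝ := fun y => (φ ((y:ℂ) * Complex.I)).im / y with hratio
  have hratio_pos : ∀ᶠ y in atTop, 0 ≤ ratio y := by
    filter_upwards [eventually_gt_atTop (0:ℝ)] with y hy
    exact le_of_lt (div_pos (hφm _ (by simp [hy])) hy)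
  have hratio_bdd : ∀ᶠ y in atTop, ratio y ≤ 2 * (φ Complex.I).im := by
    filter_upwards [eventually_ge_atTop (1:ℝ)] with y hy
    have hy0 : (0:ℝ) < y := lt_of_lt_of_le one_pos hy
    have key := harnack_vert hφd hφm (z := Complex.I) (by simp) hy0
    have hI : ‖Complex.I‖ = 1 := by simp
    rw [hratio]
    simp only
    rw [div_le_iff₀ hy0]
    have hIim : (Complex.I).im = 1 := Complex.I_im
    rw [hI, hIim] at key
    have hpI : 0 < (φ Complex.I).im := hφm Complex.I (by simp)
    have hy2 : 0 ≤ y^2 - 1 := by nlinarith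
    nlinarith [key, mul_nonneg hpI.le hy2, mul_pos hy0 hy0]
  set c0 : ℝ := liminf ratio atTop with hc0
  set c : ℝ := max c0 0 with hc
  have hcnn : 0 ≤ c := le_max_right _ _
  -- Julia's lemma
  have hbdd : IsBoundedUnder (· ≥ ·) atTop ratio :=
    isBoundedUnder_of_eventually_ge hratio_pos
  have hjulia : ∀ z ∈ UH, c * z.im ≤ (φ z).im := by
    intro z hz
    have hzim : 0 < z.im := hz
    set L : ℝ := (φ z).im / z.im with hLdef
    have hL : (φ z).im = L * z.im := by
      rw [hLdef]; field_simp
    have hLpos : 0 < L := div_pos (hφm z hzim) hzim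
    have hc0L : c0 ≤ L := by
      by_contra hcon
      push_neg at hcon
      set ε : ℝ := (c0 - L) / 2 with hε
      have hεpos : 0 < ε := by rw [hε]; linarith
      have hev : ∀ᶠ y in atTop, ratio y ≤ L + ε := by
        filter_upwards [eventually_ge_atTop
          (max 1 (Real.sqrt ((φ z).im * ‖z‖^2 / (ε * z.im))))] with y hy
        have hy1 : (1:ℝ) ≤ y := le_trans (le_max_left _ _) hy
        have hy0 : (0:ℝ) < y := lt_of_lt_of_le one_pos hy1
        have hq : 0 ≤ (φ z).im * ‖z‖^2 / (ε * z.im) :=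
          div_nonneg (mul_nonneg (hφm z hzim).le (sq_nonneg _)) (by positivity)
        have hysq : (φ z).im * ‖z‖^2 / (ε * z.im) ≤ y^2 := by
          have h1 : Real.sqrt ((φ z).im * ‖z‖^2 / (ε * z.im)) ≤ y :=
            le_trans (le_max_right _ _) hy
          nlinarith [Real.sq_sqrt hq, Real.sqrt_nonneg ((φ z).im * ‖z‖^2 / (ε * z.im))]
        have hy2 : (φ z).im * ‖z‖^2 ≤ ε * z.im * y^2 := by
          rw [div_le_iff₀ (by positivity : 0 < ε * z.im)] at hysq
          linarith [hysq]
        have key := harnack_vert hφd hφm hzim hy0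
        rw [hratio]
        simp only
        rw [div_le_iff₀ hy0]
        have hfin : (φ ((y:ℂ) * Complex.I)).im * (z.im * y) ≤ (L + ε) * y * (z.im * y) := by
          calc (φ ((y:ℂ) * Complex.I)).im * (z.im * y) ≤ (φ z).im * (‖z‖^2 + y^2) := key
            _ = (φ z).im * ‖z‖^2 + L * z.im * y^2 := by rw [← hL]; ring
            _ ≤ ε * z.im * y^2 + L * z.im * y^2 := by linarith
            _ = (L + ε) * y * (z.im * y) := by ring
        have hpos : 0 < z.im * y := mul_pos hzim hy0
        exact le_of_mul_le_mul_right hfin hpos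
      have : c0 ≤ L + ε := liminf_le_of_frequently_le hev.frequently hbdd
      rw [hε] at this
      linarith
    have hcL : c ≤ L := max_le hc0L hLpos.le
    calc c * z.im ≤ L * z.im := by nlinarith
      _ = (φ z).im := hL.symm
  by_cases hex : ∃ z ∈ UH, (φ z).im = c * z.im
  · -- degenerate case: equality somewhere, hence everywhere
    obtain ⟨z1, hz1U, hz1⟩ := hex
    set η : ℂ → ℂ := fun z => φ z - (c:ℂ) * z with hη
    have hηd : DifferentiableOn ℂ η UH :=
      hφd.sub (((differentiable_const _).mul differentiable_id).differentiableOn)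
    have hηim : ∀ z : ℂ, (η z).im = (φ z).im - c * z.im := by
      intro z
      simp [hη, Complex.sub_im, Complex.mul_im, Complex.ofReal_re, Complex.ofReal_im]
    set W : ℂ → ℂ := fun z => Complex.exp (Complex.I * η z) with hW
    have hWd : DifferentiableOn ℂ W UH :=
      ((differentiable_const Complex.I).differentiableOn.mul hηd).cexp
    have hWnorm : ∀ z : ℂ, ‖W z‖ = Real.exp (-(η z).im) := by
      intro z
      rw [hW]
      simp only
      rw [Complex.norm_exp]
      congr 1
      simp [Complex.mul_re]
    have hmax : IsMaxOn (norm ∘ W) UH z1 := by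
      intro z hz
      show ‖W z‖ ≤ ‖W z1‖
      rw [hWnorm z, hWnorm z1, hηim, hηim, hz1]
      simp only [sub_self, neg_zero, Real.exp_zero]
      rw [Real.exp_le_one_iff]
      linarith [hjulia z hz]
    have hconn : IsPreconnected UH := (convex_halfSpace_im_gt 0).isPreconnected
    have hEqc := Complex.eqOn_of_isPreconnected_of_isMaxOn_norm hconn hUopen hWd hz1U hmax
    have hveq : ∀ z ∈ UH, (φ z).im = c * z.im := by
      intro z hz
      have h1 : ‖W z‖ = ‖W z1‖ := by rw [hEqc hz]; rfl
      rw [hWnorm, hWnorm] at h1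
      have h2 := Real.exp_injective h1
      rw [hηim, hηim, hz1] at h2
      simp only [sub_self, neg_zero, neg_eq_zero] at h2
      linarith [sub_eq_zero.mp h2]
    have hceq : c = b.im := by
      have h1 := hveq Complex.I hIU
      have h2 : (φ Complex.I).im = (f Complex.I).im := him _ hIU
      rw [hfi] at h2
      rw [h2, Complex.I_im, mul_one] at h1
      exact h1.symm
    have hderiv : ∀ z ∈ UH, deriv h z - deriv g z = (c:ℂ) := by
      intro z hz
      have hhd : HasDerivAt h (deriv h z) z :=
        (hh.differentiableAt (hUopen.mem_nhds hz)).hasDerivAt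
      have hgd : HasDerivAt g (deriv g z) z :=
        (hg.differentiableAt (hUopen.mem_nhds hz)).hasDerivAt
      have hlin : HasDerivAt (fun w : ℂ => (c:ℂ) * w) (c:ℂ) z := by
        simpa using (hasDerivAt_id z).const_mul (c:ℂ)
      have hηd' : HasDerivAt η (deriv h z - deriv g z - (c:ℂ)) z := (hhd.sub hgd).sub hlin
      have hWd' : HasDerivAt W
          (Complex.exp (Complex.I * η z) * (Complex.I * (deriv h z - deriv g z - (c:ℂ)))) z :=
        (hηd'.const_mul Complex.I).cexp
      have hev : W =ᶠ[nhds z] (fun _ => W z1) :=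
        Filter.eventuallyEq_of_mem (hUopen.mem_nhds hz) (fun w hw => hEqc hw)
      have h0 : deriv W z = 0 := by
        rw [hev.deriv_eq]
        exact deriv_const _ _
      rw [hWd'.deriv] at h0
      rcases mul_eq_zero.mp h0 with h1 | h1
      · exact absurd h1 (Complex.exp_ne_zero _)
      rcases mul_eq_zero.mp h1 with h2 | h2
      · exact absurd h2 Complex.I_ne_zero
      exact sub_eq_zero.mp h2
    constructor
    · intro z hz
      rw [← him z hz, hveq z hz, hceq]
    · refine ⟨fun z => deriv h z + deriv g z, ?_, ?_, ?_⟩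
      · exact ((hh.analyticOnNhd hUopen).deriv.differentiableOn).add
          ((hg.analyticOnNhd hUopen).deriv.differentiableOn)
      · intro z hz
        have hd := hderiv z hz
        have hcpos : 0 < c := by rw [hceq]; exact hb
        have hhp : deriv h z = deriv g z + (c:ℂ) := by linear_combination hd
        have hre : (deriv h z + deriv g z).re = 2 * (deriv g z).re + c := by
          rw [hhp]
          simp [Complex.add_re, Complex.ofReal_re]
          ring
        have hn := hsense z hz
        rw [hhp] at hn
        have hsq : ‖deriv g z‖^2 < ‖deriv g z + (c:ℂ)‖^2 := by
          nlinarith [norm_nonneg (deriv g z), norm_nonneg (deriv g z + (c:ℂ))]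
        rw [norm_sq_eq, norm_sq_eq] at hsq
        simp only [Complex.add_re, Complex.add_im, Complex.ofReal_re, Complex.ofReal_im,
          add_zero] at hsq
        rw [hre]
        nlinarith [hsq, hcpos]
      · intro z hz
        have hd := hderiv z hz
        rw [← hceq]
        constructor
        · rw [eq_div_iff (two_ne_zero)]
          linear_combination hd
        · rw [eq_div_iff (two_ne_zero)]
          linear_combination -hd
  · -- strict case: contradiction via barrier argument
    exfalso
    push_neg at hex
    set η : ℂ → ℂ := fun z => φ z - (c:ℂ) * z with hη
    have hηd : DifferentiableOn ℂ η UH :=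
      hφd.sub (((differentiable_const _).mul differentiable_id).differentiableOn)
    have hηim : ∀ z : ℂ, (η z).im = (φ z).im - c * z.im := by
      intro z
      simp [hη, Complex.sub_im, Complex.mul_im, Complex.ofReal_re, Complex.ofReal_im]
    have hηm : ∀ z : ℂ, 0 < z.im → 0 < (η z).im := by
      intro z hz
      rw [hηim]
      have h1 := hjulia z hz
      have h2 := hex z hz
      rcases lt_or_eq_of_le h1 with h3 | h3
      · linarith
      · exact absurd h3.symm h2
    set v0 : ℝ := (η Complex.I).im with hv0
    have hv0pos : 0 < v0 := hηm Complex.I (by simp)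
    set σ : ℝ := v0 / 4 with hσ
    set τ : ℝ := v0 / 32 with hτ
    have hσpos : 0 < σ := by rw [hσ]; linarith
    have hτpos : 0 < τ := by rw [hτ]; linarith
    -- a large radius with small vertical ratio
    have hcob : IsCoboundedUnder (· ≥ ·) atTop ratio :=
      isCoboundedUnder_ge_of_eventually_le atTop hratio_bdd
    have hfreq : ∃ᶠ y in atTop, ratio y < c0 + τ :=
      frequently_lt_of_liminf_lt hcob (by rw [← hc0]; linarith)
    obtain ⟨R, hRτ', hR2⟩ := (hfreq.and_eventually (eventually_ge_atTop (2:ℝ))).exists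
    have hRpos : (0:ℝ) < R := by linarith
    have hRIim : ((R:ℂ) * Complex.I).im = R := by simp
    set vR : ℝ := (η ((R:ℂ) * Complex.I)).im with hvRdef
    have hvRpos : 0 < vR := hηm _ (by rw [hRIim]; exact hRpos)
    have hvR : vR < τ * R := by
      rw [hratio] at hRτ'
      simp only at hRτ'
      rw [div_lt_iff₀ hRpos] at hRτ'
      have hc0c : c0 ≤ c := le_max_left _ _
      rw [hvRdef, hηim, hRIim]
      nlinarith [hRτ', hRpos]
    -- uniform smallness of Im F near the real axis
    obtain ⟨δ, hδpos, hδ1, hδ⟩ : ∃ δ : ℝ, 0 < δ ∧ δ < 1 ∧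
        ∀ z : ℂ, ‖z‖ ≤ R → 0 < z.im → z.im ≤ δ → (F z).im < σ := by
      set K : Set ℂ := closedBall (0:ℂ) R ∩ {z : ℂ | 0 ≤ z.im ∧ z.im ≤ 1} with hK
      have hKsub : K ⊆ {z : ℂ | 0 ≤ z.im} := fun z hz => hz.2.1
      have hKclosed2 : IsClosed {z : ℂ | 0 ≤ z.im ∧ z.im ≤ 1} := by
        have : {z : ℂ | 0 ≤ z.im ∧ z.im ≤ 1} = Complex.im ⁻¹' (Icc 0 1) := by
          ext w; simp [mem_Icc]
        rw [this]
        exact isClosed_Icc.preimage Complex.continuous_im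
      have hKc : IsCompact K := (isCompact_closedBall 0 R).inter_right hKclosed2
      have hKclosed : IsClosed K := (isClosed_closedBall).inter hKclosed2
      set C : Set ℂ := K ∩ (fun z => (F z).im) ⁻¹' (Ici σ) with hC
      have hFim : ContinuousOn (fun z => (F z).im) K :=
        Complex.continuous_im.comp_continuousOn (hFcont.mono hKsub)
      have hCclosed : IsClosed C :=
        hFim.preimage_isClosed_of_isClosed hKclosed isClosed_Ici
      have hCc : IsCompact C := hKc.of_isClosed_subset hCclosed inter_subset_left
      have hmem : ∀ z : ℂ, ‖z‖ ≤ R → 0 ≤ z.im → z.im ≤ 1 → σ ≤ (F z).im → z ∈ C := by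
        intro z h1 h2 h3 h4
        exact ⟨⟨by rwa [mem_closedBall, dist_zero_right], h2, h3⟩, h4⟩
      rcases C.eq_empty_or_nonempty with hCe | hCne
      · refine ⟨1/2, by norm_num, by norm_num, fun z h1 h2 h3 => ?_⟩
        by_contra hge
        push_neg at hge
        have : z ∈ C := hmem z h1 h2.le (by linarith) hge
        rw [hCe] at this
        exact this
      · obtain ⟨zm, hzmC, hzmmin⟩ := hCc.exists_isMinOn hCne Complex.continuous_im.continuousOn
        have hzmpos : 0 < zm.im := by
          rcases lt_or_eq_of_le hzmC.1.2.1 with h1 | h1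
          · exact h1
          · exfalso
            have hzr : zm = ((zm.re : ℝ) : ℂ) := by
              apply Complex.ext <;> simp [← h1]
            have := hzmC.2
            rw [mem_preimage, mem_Ici] at this
            rw [hzr] at this
            rw [hFreal zm.re] at this
            linarith
        refine ⟨min (zm.im/2) (1/2), by positivity,
          lt_of_le_of_lt (min_le_right _ _) (by norm_num), ?_⟩
        intro z h1 h2 h3
        by_contra hge
        push_neg at hge
        have hzC : z ∈ C := hmem z h1 h2.le
          (le_trans h3 (le_trans (min_le_right _ _) (by norm_num))) hge
        have h5 : zm.im ≤ z.im := hzmmin hzC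
        have h6 : z.im ≤ zm.im/2 := le_trans h3 (min_le_left _ _)
        linarith
    -- the barrier function and maximum principle
    set A : ℝ := 4 * R * vR with hA
    have hAnn : 0 ≤ A := by positivity
    set Ω : Set ℂ := {z : ℂ | ‖z‖ < R ∧ δ < z.im} with hΩ
    have hΩeq : Ω = {z : ℂ | ‖z‖ < R} ∩ {z : ℂ | δ < z.im} := by
      ext w; simp [hΩ, mem_inter_iff]
    have hΩopen : IsOpen Ω := by
      rw [hΩeq]
      exact (isOpen_lt continuous_norm continuous_const).inter
        (isOpen_lt continuous_const Complex.continuous_im)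
    have hΩbdd : Bornology.IsBounded Ω :=
      Metric.isBounded_ball.subset (fun z hz => mem_ball_zero_iff.mpr hz.1)
    set G : ℂ → ℂ := fun z => η z + (A:ℂ)/(z - (R:ℂ)) + (A:ℂ)/(z + (R:ℂ)) with hG
    set Wb : ℂ → ℂ := fun z => Complex.exp (-(Complex.I * G z)) with hWb
    have hWbnorm : ∀ z : ℂ, ‖Wb z‖ = Real.exp ((G z).im) := by
      intro z
      rw [hWb]
      simp only
      rw [Complex.norm_exp]
      congr 1
      simp [Complex.neg_re, Complex.mul_re]
    have hdivim : ∀ (w : ℂ), (((A:ℝ):ℂ)/w).im = -(A * w.im) / Complex.normSq w := by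
      intro w
      rw [Complex.div_im]
      simp [Complex.ofReal_re, Complex.ofReal_im]
      ring
    have hGim : ∀ z : ℂ, (G z).im = (η z).im - A*z.im/Complex.normSq (z - (R:ℂ))
        - A*z.im/Complex.normSq (z + (R:ℂ)) := by
      intro z
      rw [hG]
      simp only [Complex.add_im]
      rw [hdivim, hdivim]
      have h1 : (z - (R:ℂ)).im = z.im := by simp
      have h2 : (z + (R:ℂ)).im = z.im := by simp
      rw [h1, h2]
      ring
    -- differentiability up to the closure
    set Scl : Set ℂ := {z : ℂ | ‖z‖ ≤ R ∧ δ ≤ z.im} with hScl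
    have hSclclosed : IsClosed Scl := by
      have : Scl = {z : ℂ | ‖z‖ ≤ R} ∩ {z : ℂ | δ ≤ z.im} := by
        ext w; simp [hScl, mem_inter_iff]
      rw [this]
      exact (isClosed_le continuous_norm continuous_const).inter
        (isClosed_le continuous_const Complex.continuous_im)
    have hclosS : closure Ω ⊆ Scl :=
      closure_minimal (fun z hz => ⟨hz.1.le, hz.2.le⟩) hSclclosed
    have hWbd : DifferentiableOn ℂ Wb {z : ℂ | 0 < z.im} := by
      have hne1 : ∀ z : ℂ, 0 < z.im → z - (R:ℂ) ≠ 0 := by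
        intro z hz h0
        have : (z - (R:ℂ)).im = 0 := by rw [h0]; simp
        simp only [Complex.sub_im, Complex.ofReal_im, sub_zero] at this
        linarith
      have hne2 : ∀ z : ℂ, 0 < z.im → z + (R:ℂ) ≠ 0 := by
        intro z hz h0
        have : (z + (R:ℂ)).im = 0 := by rw [h0]; simp
        simp only [Complex.add_im, Complex.ofReal_im, add_zero] at this
        linarith
      have hGd : DifferentiableOn ℂ G {z : ℂ | 0 < z.im} := by
        apply DifferentiableOn.add
        apply DifferentiableOn.add
        · exact hηd
        · exact DifferentiableOn.div (differentiableOn_const _)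
            (differentiableOn_id.sub (differentiableOn_const _)) (fun z hz => hne1 z hz)
        · exact DifferentiableOn.div (differentiableOn_const _)
            (differentiableOn_id.add (differentiableOn_const _)) (fun z hz => hne2 z hz)
      exact (((differentiable_const Complex.I).differentiableOn.mul hGd).neg).cexp
    have hsubU : Scl ⊆ {z : ℂ | 0 < z.im} := fun z hz => lt_of_lt_of_le hδpos hz.2
    have hdiffcl : DiffContOnCl ℂ Wb Ω :=
      DifferentiableOn.diffContOnCl (hWbd.mono (fun z hz => hsubU (hclosS hz)))
    -- frontier estimate
    have hfront : ∀ z ∈ frontier Ω, ‖Wb z‖ ≤ Real.exp σ := by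
      intro z hz
      rw [hΩopen.frontier_eq] at hz
      obtain ⟨hzc, hznot⟩ := hz
      obtain ⟨hnR, hδim⟩ := hclosS hzc
      have him0 : 0 < z.im := lt_of_lt_of_le hδpos hδim
      have hzU : z ∈ UH := him0
      have hns1 : 0 < Complex.normSq (z - (R:ℂ)) := by
        rw [Complex.normSq_pos, sub_ne_zero]
        intro h0
        rw [h0] at him0
        simp at him0
      have hns2 : 0 < Complex.normSq (z + (R:ℂ)) := by
        rw [Complex.normSq_pos]
        intro h0
        have : (z + (R:ℂ)).im = 0 := by rw [h0]; simp
        simp only [Complex.add_im, Complex.ofReal_im, add_zero] at this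
        linarith
      have hterm1 : 0 ≤ A*z.im/Complex.normSq (z - (R:ℂ)) :=
        div_nonneg (mul_nonneg hAnn him0.le) hns1.le
      have hterm2 : 0 ≤ A*z.im/Complex.normSq (z + (R:ℂ)) :=
        div_nonneg (mul_nonneg hAnn him0.le) hns2.le
      rw [hWbnorm, Real.exp_le_exp, hGim]
      rcases eq_or_lt_of_le hnR with harc | hint
      · -- on the circular arc
        have E1 : (η z).im * z.im ≤ 2 * R * vR := by
          rw [hvRdef]
          exact harnack_arc hηd hηm him0 hRpos harc
        have hsq : z.re^2 + z.im^2 = R^2 := by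
          have := norm_sq_eq z
          rw [harc] at this
          linarith
        have hxR : z.re ≤ R := by nlinarith [sq_nonneg z.im]
        have hxR' : -R ≤ z.re := by nlinarith [sq_nonneg z.im]
        have hn1 : Complex.normSq (z - (R:ℂ)) = 2*R^2 - 2*R*z.re := by
          rw [Complex.normSq_apply]
          simp only [Complex.sub_re, Complex.sub_im, Complex.ofReal_re, Complex.ofReal_im,
            sub_zero]
          nlinarith [hsq]
        have hn2 : Complex.normSq (z + (R:ℂ)) = 2*R^2 + 2*R*z.re := by
          rw [Complex.normSq_apply]
          simp only [Complex.add_re, Complex.add_im, Complex.ofReal_re, Complex.ofReal_im,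
            add_zero]
          nlinarith [hsq]
        rcases le_or_gt 0 z.re with hre | hre
        · -- right half : use the pole at R
          have hkey : (η z).im * Complex.normSq (z - (R:ℂ)) * z.im ≤ (A * z.im) * z.im := by
            rw [hn1, hA]
            nlinarith [E1, mul_nonneg (mul_nonneg hRpos.le hvRpos.le) hre,
              mul_nonneg (mul_nonneg hvRpos.le hre) (sub_nonneg.mpr hxR)]
          have hkey2 : (η z).im * Complex.normSq (z - (R:ℂ)) ≤ A * z.im :=
            le_of_mul_le_mul_right hkey him0
          have : (η z).im ≤ A*z.im/Complex.normSq (z - (R:ℂ)) :=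
            (le_div_iff₀ hns1).mpr hkey2
          linarith
        · -- left half : use the pole at -R
          have hkey : (η z).im * Complex.normSq (z + (R:ℂ)) * z.im ≤ (A * z.im) * z.im := by
            rw [hn2, hA]
            nlinarith [E1, mul_nonneg (mul_nonneg hRpos.le hvRpos.le) (neg_nonneg.mpr hre.le),
              mul_nonneg (mul_nonneg hvRpos.le (neg_nonneg.mpr hre.le))
                (sub_nonneg.mpr hxR')]
          have hkey2 : (η z).im * Complex.normSq (z + (R:ℂ)) ≤ A * z.im :=
            le_of_mul_le_mul_right hkey him0
          have : (η z).im ≤ A*z.im/Complex.normSq (z + (R:ℂ)) :=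
            (le_div_iff₀ hns2).mpr hkey2
          linarith
      · -- on the bottom edge
        have hbot : z.im = δ := by
          by_contra hne
          exact hznot ⟨hint, lt_of_le_of_ne hδim (Ne.symm hne)⟩
        have hFz : (F z).im < σ := hδ z hnR him0 hbot.le
        have hηz : (η z).im ≤ (F z).im := by
          rw [hηim, hFeq hzU, ← him z hzU]
          nlinarith [mul_nonneg hcnn him0.le]
        linarith
    -- apply the maximum principle at I
    have hIΩ : Complex.I ∈ Ω := by
      constructor
      · simp only [Complex.norm_I]
        linarith
      · rw [Complex.I_im]
        linarith
    have hfin := Complex.norm_le_of_forall_mem_frontier_norm_le hΩbdd hdiffcl hfront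
      (subset_closure hIΩ)
    rw [hWbnorm, Real.exp_le_exp, hGim] at hfin
    have hn1 : Complex.normSq (Complex.I - (R:ℂ)) = R^2 + 1 := by
      rw [Complex.normSq_apply]
      simp [Complex.sub_re, Complex.sub_im]
      ring
    have hn2 : Complex.normSq (Complex.I + (R:ℂ)) = R^2 + 1 := by
      rw [Complex.normSq_apply]
      simp [Complex.add_re, Complex.add_im]
      ring
    rw [hn1, hn2, Complex.I_im] at hfin
    -- hfin : v0 - A*1/(R^2+1) - A*1/(R^2+1) ≤ σ
    have hR21 : (0:ℝ) < R^2 + 1 := by positivity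
    have hAbound : A * 1 / (R^2+1) ≤ 4 * τ := by
      rw [hA, div_le_iff₀ hR21]
      nlinarith [hvR, hRpos, hτpos]
    rw [← hv0] at hfin
    nlinarith [hfin, hAbound, hv0pos]

end Main
end

section
/- Let h, g be holomorphic on the upper half-plane U with h' nowhere zero, ω = g'/h' satisfying |ω| < 1, and suppose ω = q² for a holomorphic q. Then the Gauss curvature K = −|ω'|²/(|h' g'|(1 + |ω|)⁴) of the associated minimal graph satisfies |K(z)| ≤ 1/((Im z)²·(|h'(z)| + |g'(z)|)²) for every z ∈ U. -/
set_option autoImplicit false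
open Complex Set

open Metric

lemma norm_sq_complex (z : ℂ) : ‖z‖ ^ 2 = z.re ^ 2 + z.im ^ 2 := by
  rw [Complex.sq_norm, Complex.normSq_apply]; ring

lemma moebius_lt_one (w₀ w : ℂ) (h₀ : ‖w₀‖ < 1) (h : ‖w‖ < 1) :
    ‖(w - w₀) / (1 - (starRingEnd ℂ) w₀ * w)‖ < 1 := by
  have key : ‖w - w₀‖ ^ 2 + (1 - ‖w₀‖ ^ 2) * (1 - ‖w‖ ^ 2)
      = ‖1 - (starRingEnd ℂ) w₀ * w‖ ^ 2 := by
    simp only [norm_sq_complex, Complex.sub_re, Complex.sub_im, Complex.mul_re, Complex.mul_im,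
      Complex.conj_re, Complex.conj_im, Complex.one_re, Complex.one_im]
    ring
  have h1 : 0 < (1 - ‖w₀‖ ^ 2) * (1 - ‖w‖ ^ 2) := mul_pos (by nlinarith [norm_nonneg w₀]) (by nlinarith [norm_nonneg w])
  have h2 : ‖w - w₀‖ ^ 2 < ‖1 - (starRingEnd ℂ) w₀ * w‖ ^ 2 := by linarith
  have h3 : ‖w - w₀‖ < ‖1 - (starRingEnd ℂ) w₀ * w‖ :=
    lt_of_pow_lt_pow_left₀ 2 (norm_nonneg _) h2
  have h4 : 0 < ‖1 - (starRingEnd ℂ) w₀ * w‖ := lt_of_le_of_lt (norm_nonneg _) h3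
  rw [norm_div, div_lt_one h4]
  exact h3

lemma cayley_im_pos (z₀ ζ : ℂ) (hz₀ : 0 < z₀.im) (hζ : ‖ζ‖ < 1) :
    0 < ((z₀ - (starRingEnd ℂ) z₀ * ζ) / (1 - ζ)).im := by
  have hζ1 : (1 : ℂ) - ζ ≠ 0 := by
    intro hc
    have : ζ = 1 := by linear_combination -hc
    rw [this] at hζ; simp at hζ
  have hns : 0 < Complex.normSq (1 - ζ) := Complex.normSq_pos.mpr hζ1
  have hζ2 : ζ.re ^ 2 + ζ.im ^ 2 < 1 := by
    have := norm_sq_complex ζ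
    nlinarith [norm_nonneg ζ]
  rw [Complex.div_im, div_sub_div_same]
  apply div_pos _ hns
  simp only [Complex.sub_re, Complex.sub_im, Complex.mul_re, Complex.mul_im,
    Complex.conj_re, Complex.conj_im, Complex.one_re, Complex.one_im]
  nlinarith

lemma schwarz_pick_halfplane (q : ℂ → ℂ)
    (hq : DifferentiableOn ℂ q {z : ℂ | 0 < z.im})
    (hq1 : ∀ z : ℂ, 0 < z.im → ‖q z‖ < 1)
    (z₀ : ℂ) (hz₀ : 0 < z₀.im) :
    2 * z₀.im * ‖deriv q z₀‖ ≤ 1 - ‖q z₀‖ ^ 2 := by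
  set Uopen : Set ℂ := {z : ℂ | 0 < z.im} with hUdef
  have hUo : IsOpen Uopen := isOpen_lt continuous_const Complex.continuous_im
  set w₀ : ℂ := q z₀ with hw₀
  have hw₀1 : ‖w₀‖ < 1 := hq1 z₀ hz₀
  set φ : ℂ → ℂ := fun ζ => (z₀ - (starRingEnd ℂ) z₀ * ζ) / (1 - ζ) with hφdef
  set ψ : ℂ → ℂ := fun w => (w - w₀) / (1 - (starRingEnd ℂ) w₀ * w) with hψdef
  set F : ℂ → ℂ := fun ζ => ψ (q (φ ζ)) with hFdef
  -- basic facts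
  have hφmem : ∀ ζ ∈ ball (0:ℂ) 1, φ ζ ∈ Uopen := fun ζ hζ =>
    cayley_im_pos z₀ ζ hz₀ (by simpa using mem_ball_zero_iff.mp hζ)
  have hden1 : ∀ ζ ∈ ball (0:ℂ) 1, (1:ℂ) - ζ ≠ 0 := by
    intro ζ hζ hc
    have : ζ = 1 := by linear_combination -hc
    rw [mem_ball_zero_iff, this] at hζ; simp at hζ
  have hden2 : ∀ w : ℂ, ‖w‖ < 1 → (1:ℂ) - (starRingEnd ℂ) w₀ * w ≠ 0 := by
    intro w hw hc
    have h1 : ‖(starRingEnd ℂ) w₀ * w‖ < 1 := by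
      rw [norm_mul, RCLike.norm_conj]
      nlinarith [norm_nonneg w₀, norm_nonneg w]
    have : (starRingEnd ℂ) w₀ * w = 1 := by linear_combination -hc
    rw [this] at h1; simp at h1
  have hφ0 : φ 0 = z₀ := by simp [hφdef]
  have hF0 : F 0 = 0 := by simp [hFdef, hψdef, hφ0, hw₀]
  -- differentiability of F on the ball
  have hFdiff : DifferentiableOn ℂ F (ball (0:ℂ) 1) := by
    intro ζ hζ
    have hφd : DifferentiableAt ℂ φ ζ := by
      apply DifferentiableAt.div
      · exact (differentiableAt_const _).sub ((differentiableAt_const _).mul differentiableAt_id)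
      · exact (differentiableAt_const _).sub differentiableAt_id
      · exact hden1 ζ hζ
    have hqd : DifferentiableAt ℂ q (φ ζ) :=
      (hq (φ ζ) (hφmem ζ hζ)).differentiableAt (hUo.mem_nhds (hφmem ζ hζ))
    have hqφ1 : ‖q (φ ζ)‖ < 1 := hq1 (φ ζ) (hφmem ζ hζ)
    have hψd : DifferentiableAt ℂ ψ (q (φ ζ)) := by
      apply DifferentiableAt.div
      · exact differentiableAt_id.sub (differentiableAt_const _)
      · exact (differentiableAt_const _).sub ((differentiableAt_const _).mul differentiableAt_id)
      · exact hden2 _ hqφ1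
    exact ((hψd.comp (φ ζ) hqd).comp ζ hφd).differentiableWithinAt
  -- maps to
  have hFmaps : MapsTo F (ball (0:ℂ) 1) (ball (F 0) 1) := by
    intro ζ hζ
    rw [hF0, mem_ball_zero_iff]
    exact moebius_lt_one w₀ _ hw₀1 (hq1 (φ ζ) (hφmem ζ hζ))
  have hbound : ‖deriv F 0‖ ≤ 1 := by
    have := Complex.norm_deriv_le_div_of_mapsTo_ball hFdiff (hFmaps.mono_right ball_subset_closedBall) one_pos
    simpa using this
  -- compute deriv F 0 via chain rule
  have hφ' : HasDerivAt φ (z₀ - (starRingEnd ℂ) z₀) 0 := by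
    have h1 : HasDerivAt (fun ζ : ℂ => z₀ - (starRingEnd ℂ) z₀ * ζ) (-(starRingEnd ℂ) z₀) 0 := by
      simpa using ((hasDerivAt_id (0:ℂ)).const_mul ((starRingEnd ℂ) z₀)).const_sub z₀
    have h2 : HasDerivAt (fun ζ : ℂ => (1:ℂ) - ζ) (-1) 0 := by
      simpa using (hasDerivAt_id (0:ℂ)).const_sub 1
    have : HasDerivAt φ _ 0 := h1.div h2 (by norm_num)
    convert this using 1
    field_simp
    ring
  have hq' : HasDerivAt q (deriv q z₀) z₀ :=
    ((hq z₀ hz₀).differentiableAt (hUo.mem_nhds hz₀)).hasDerivAt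
  have hψ' : HasDerivAt ψ (1 / (1 - (starRingEnd ℂ) w₀ * w₀)) w₀ := by
    have hne : (1:ℂ) - (starRingEnd ℂ) w₀ * w₀ ≠ 0 := hden2 w₀ hw₀1
    have h1 : HasDerivAt (fun w : ℂ => w - w₀) 1 w₀ := by
      simpa using (hasDerivAt_id w₀).sub_const w₀
    have h2 : HasDerivAt (fun w : ℂ => (1:ℂ) - (starRingEnd ℂ) w₀ * w)
        (-(starRingEnd ℂ) w₀) w₀ := by
      simpa using ((hasDerivAt_id w₀).const_mul ((starRingEnd ℂ) w₀)).const_sub 1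
    have : HasDerivAt ψ _ w₀ := h1.div h2 hne
    convert this using 1
    field_simp
    ring
  have hqφ' : HasDerivAt (fun ζ => q (φ ζ)) (deriv q z₀ * (z₀ - (starRingEnd ℂ) z₀)) 0 := by
    have hq'' : HasDerivAt q (deriv q z₀) (φ 0) := hφ0 ▸ hq'
    exact hq''.comp 0 hφ'
  have hF' : HasDerivAt F
      (1 / (1 - (starRingEnd ℂ) w₀ * w₀) * (deriv q z₀ * (z₀ - (starRingEnd ℂ) z₀))) 0 := by
    have hψ'' : HasDerivAt ψ (1 / (1 - (starRingEnd ℂ) w₀ * w₀)) (q (φ 0)) := by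
      rw [hφ0, ← hw₀]; exact hψ'
    exact hψ''.comp 0 hqφ'
  have hderivF : deriv F 0 = 1 / (1 - (starRingEnd ℂ) w₀ * w₀) *
      (deriv q z₀ * (z₀ - (starRingEnd ℂ) z₀)) := hF'.deriv
  -- norms
  have hsub : ‖z₀ - (starRingEnd ℂ) z₀‖ = 2 * z₀.im := by
    rw [Complex.sub_conj]
    simp [abs_of_pos hz₀]
  have hreal : (1:ℂ) - (starRingEnd ℂ) w₀ * w₀ = ((1 - ‖w₀‖ ^ 2 : ℝ) : ℂ) := by
    rw [mul_comm, Complex.mul_conj]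
    rw [Complex.normSq_eq_norm_sq]
    push_cast
    ring
  have ht1 : (0:ℝ) < 1 - ‖w₀‖ ^ 2 := by nlinarith [norm_nonneg w₀]
  have hnrm : ‖deriv F 0‖ = 1 / (1 - ‖w₀‖ ^ 2) * (‖deriv q z₀‖ * (2 * z₀.im)) := by
    rw [hderivF, hreal, norm_mul, norm_mul, hsub, norm_div, norm_one,
      Complex.norm_real, Real.norm_eq_abs, abs_of_pos ht1]
  rw [hnrm] at hbound
  rw [div_mul_eq_mul_div, one_mul, div_le_one ht1] at hbound
  rw [hw₀] at ht1 ⊢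
  linarith


/-- Curvature bound on the upper half-plane in terms of the underlying harmonic
map `f = h + conj g`: with `ω = g'/h'`, `|ω| < 1`, `ω = q²`, the Gauss
curvature `K = −|ω'|²/(|h'g'|(1+|ω|)⁴)` satisfies
`|K(z)| ≤ 1/((Im z)²(|h'(z)|+|g'(z)|)²)`. -/
theorem curvature_bound_halfplane
    (U : Set ℂ) (hU : U = {z : ℂ | 0 < z.im})
    (h g q : ℂ → ℂ) (ω : ℂ → ℂ)
    (hh : DifferentiableOn ℂ h U) (hg : DifferentiableOn ℂ g U)
    (hh0 : ∀ z ∈ U, deriv h z ≠ 0)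
    (hω : ∀ z ∈ U, ω z = deriv g z / deriv h z)
    (hω1 : ∀ z ∈ U, ‖ω z‖ < 1)
    (hqdiff : DifferentiableOn ℂ q U)
    (hqsq : ∀ z ∈ U, q z ^ 2 = ω z)
    (K : ℂ → ℝ)
    (hK : ∀ z ∈ U, K z = -(‖deriv ω z‖ ^ 2) /
      (‖deriv h z * deriv g z‖ * (1 + ‖ω z‖) ^ 4)) :
    ∀ z ∈ U, |K z| ≤ 1 / (z.im ^ 2 * (‖deriv h z‖ + ‖deriv g z‖) ^ 2) := by
  subst hU
  intro z hz
  have hUo : IsOpen {z : ℂ | 0 < z.im} := isOpen_lt continuous_const Complex.continuous_im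
  have hzim : 0 < z.im := hz
  -- q maps into the unit disc
  have hq1 : ∀ w : ℂ, 0 < w.im → ‖q w‖ < 1 := by
    intro w hw
    have h1 : ‖q w‖ ^ 2 < 1 := by
      rw [← norm_pow, hqsq w hw]; exact hω1 w hw
    nlinarith [norm_nonneg (q w)]
  -- Schwarz–Pick
  have hSP : 2 * z.im * ‖deriv q z‖ ≤ 1 - ‖q z‖ ^ 2 :=
    schwarz_pick_halfplane q hqdiff hq1 z hzim
  -- deriv ω z = 2 * q z * deriv q z
  have hωev : ω =ᶠ[nhds z] fun w => q w ^ 2 :=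
    Filter.eventuallyEq_of_mem (hUo.mem_nhds hz) (fun w hw => (hqsq w hw).symm)
  have hqz : HasDerivAt q (deriv q z) z :=
    ((hqdiff z hz).differentiableAt (hUo.mem_nhds hz)).hasDerivAt
  have hderivω : deriv ω z = 2 * q z * deriv q z := by
    rw [hωev.deriv_eq]
    have : HasDerivAt (fun w => q w ^ 2) _ z := hqz.pow 2
    simpa using this.deriv
  -- deriv g z = ω z * deriv h z
  have hgz : deriv g z = ω z * deriv h z := by
    rw [hω z hz, div_mul_cancel₀ _ (hh0 z hz)]
  set y : ℝ := z.im
  set a : ℝ := ‖deriv h z‖ with ha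
  set t : ℝ := ‖q z‖ with htdef
  set s : ℝ := ‖deriv q z‖ with hsdef
  have ha0 : 0 < a := norm_pos_iff.mpr (hh0 z hz)
  have ht0 : 0 ≤ t := norm_nonneg _
  have hs0 : 0 ≤ s := norm_nonneg _
  have ht1 : t < 1 := hq1 z hzim
  have hωn : ‖ω z‖ = t ^ 2 := by rw [← hqsq z hz, norm_pow]
  have hgn : ‖deriv g z‖ = t ^ 2 * a := by rw [hgz, norm_mul, hωn]
  have hωdn : ‖deriv ω z‖ = 2 * t * s := by
    rw [hderivω, norm_mul, norm_mul, htdef, hsdef]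
    norm_num
  have hKz : K z = -((2 * t * s) ^ 2) / (a * (t ^ 2 * a) * (1 + t ^ 2) ^ 4) := by
    rw [hK z hz, hωdn, norm_mul, hgn, hωn, ← ha]
  rw [hgn, hKz, neg_div, abs_neg, abs_div,
    _root_.abs_of_nonneg (show (0:ℝ) ≤ (2 * t * s) ^ 2 by positivity),
    _root_.abs_of_nonneg (show (0:ℝ) ≤ a * (t ^ 2 * a) * (1 + t ^ 2) ^ 4 by positivity)]
  rcases eq_or_lt_of_le ht0 with hteq | htpos
  · rw [← hteq]
    simp
    positivity
  · rw [div_le_div_iff₀ (by positivity) (by positivity)]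
    have key : (2 * y * s) ^ 2 ≤ (1 + t ^ 2) ^ 2 := by
      have h1 : 0 ≤ 2 * y * s := by positivity
      nlinarith
    nlinarith [mul_le_mul_of_nonneg_right key
      (by positivity : (0:ℝ) ≤ t ^ 2 * a ^ 2 * (1 + t ^ 2) ^ 2)]
end

section
/- Let h, g be holomorphic on the unit disk D with h' nowhere zero, ω = g'/h' satisfying |ω| < 1 and ω = q² for some holomorphic q on D. Then the Gauss curvature K = −|ω'|²/(|h' g'|(1+|ω|)⁴) satisfies |K(z)| ≤ 4/((1 − |z|²)²·(|h'(z)| + |g'(z)|)²) for all z ∈ D. -/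
set_option autoImplicit false
open Complex Set

section Aux
open Metric

noncomputable def moeb (b w : ℂ) : ℂ := (w - b) / (1 - (starRingEnd ℂ) b * w)

lemma moeb_norm_lt {b w : ℂ} (hb : ‖b‖ < 1) (hw : ‖w‖ < 1) :
    ‖w - b‖ < ‖1 - (starRingEnd ℂ) b * w‖ := by
  have hb' : normSq b < 1 := by
    rw [← Complex.sq_norm]
    nlinarith [norm_nonneg b, hb]
  have hw' : normSq w < 1 := by
    rw [← Complex.sq_norm]
    nlinarith [norm_nonneg w, hw]
  have key : normSq (w - b) < normSq (1 - (starRingEnd ℂ) b * w) := by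
    simp only [Complex.normSq_apply, Complex.sub_re, Complex.sub_im, Complex.mul_re,
      Complex.mul_im, Complex.one_re, Complex.one_im, Complex.conj_re, Complex.conj_im] at *
    nlinarith [hb', hw']
  rw [Complex.norm_def, Complex.norm_def]
  exact Real.sqrt_lt_sqrt (normSq_nonneg _) key

lemma moeb_denom_ne {b w : ℂ} (hb : ‖b‖ < 1) (hw : ‖w‖ < 1) :
    1 - (starRingEnd ℂ) b * w ≠ 0 := by
  have := moeb_norm_lt hb hw
  intro h
  rw [h, norm_zero] at this
  exact absurd this (not_lt.2 (norm_nonneg _))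

lemma moeb_mapsTo {b : ℂ} (hb : ‖b‖ < 1) :
    MapsTo (moeb b) (ball (0:ℂ) 1) (ball (0:ℂ) 1) := by
  intro w hw
  rw [mem_ball_zero_iff] at *
  rw [moeb, norm_div, div_lt_one (lt_of_le_of_lt (norm_nonneg _) (moeb_norm_lt hb hw))]
  exact moeb_norm_lt hb hw

lemma moeb_hasDerivAt {b w : ℂ} (hd : 1 - (starRingEnd ℂ) b * w ≠ 0) :
    HasDerivAt (moeb b) ((1 - (starRingEnd ℂ) b * b) / (1 - (starRingEnd ℂ) b * w) ^ 2) w := by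
  have h1 : HasDerivAt (fun w : ℂ => w - b) 1 w := (hasDerivAt_id w).sub_const b
  have h2 : HasDerivAt (fun w : ℂ => 1 - (starRingEnd ℂ) b * w) (-((starRingEnd ℂ) b)) w := by
    simpa using (((hasDerivAt_id w).const_mul ((starRingEnd ℂ) b)).const_sub 1)
  have := h1.div h2 hd
  exact this.congr_deriv (by ring)

lemma moeb_diffOn {b : ℂ} (hb : ‖b‖ < 1) :
    DifferentiableOn ℂ (moeb b) (ball (0:ℂ) 1) := by
  intro w hw
  exact ((moeb_hasDerivAt (moeb_denom_ne hb (mem_ball_zero_iff.1 hw))).differentiableAt).differentiableWithinAt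

lemma schwarzPick {f : ℂ → ℂ} (hd : DifferentiableOn ℂ f (ball (0:ℂ) 1))
    (hm : MapsTo f (ball (0:ℂ) 1) (ball (0:ℂ) 1)) {a : ℂ} (ha : a ∈ ball (0:ℂ) 1) :
    ‖deriv f a‖ * (1 - ‖a‖ ^ 2) ≤ 1 - ‖f a‖ ^ 2 := by
  have ha' : ‖a‖ < 1 := mem_ball_zero_iff.1 ha
  have hna : ‖-a‖ < 1 := by rwa [norm_neg]
  set b := f a with hbdef
  have hb : ‖b‖ < 1 := mem_ball_zero_iff.1 (hm ha)
  -- the composition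
  set F : ℂ → ℂ := moeb b ∘ f ∘ moeb (-a) with hF
  have hm0 : moeb (-a) 0 = a := by simp [moeb]
  have hmb : moeb b b = 0 := by simp [moeb]
  have hFd : DifferentiableOn ℂ F (ball (0:ℂ) 1) := by
    refine (moeb_diffOn hb).comp (hd.comp (moeb_diffOn hna) (moeb_mapsTo hna)) ?_
    exact hm.comp (moeb_mapsTo hna)
  have hFm : MapsTo F (ball (0:ℂ) 1) (ball (0:ℂ) 1) :=
    (moeb_mapsTo hb).comp (hm.comp (moeb_mapsTo hna))
  have hF0 : F 0 = 0 := by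
    simpa [hF, Function.comp, hm0] using hmb
  have hfa : DifferentiableAt ℂ f a := hd.differentiableAt (isOpen_ball.mem_nhds ha)
  -- derivatives
  have hda : HasDerivAt (moeb (-a)) (1 - (starRingEnd ℂ) a * a) 0 := by
    have h0 : (1 : ℂ) - (starRingEnd ℂ) (-a) * 0 ≠ 0 := by simp
    have := moeb_hasDerivAt h0
    convert this using 1
    simp
  have hdb : HasDerivAt (moeb b) ((1 - (starRingEnd ℂ) b * b)⁻¹) b := by
    have hne : 1 - (starRingEnd ℂ) b * b ≠ 0 := moeb_denom_ne hb hb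
    have := moeb_hasDerivAt hne
    convert this using 1
    field_simp
  have hFa : HasDerivAt F ((1 - (starRingEnd ℂ) b * b)⁻¹ * (deriv f a) * (1 - (starRingEnd ℂ) a * a)) 0 := by
    have h1 : HasDerivAt (f ∘ moeb (-a)) (deriv f a * (1 - (starRingEnd ℂ) a * a)) 0 := by
      have hf' : HasDerivAt f (deriv f a) (moeb (-a) 0) := by rw [hm0]; exact hfa.hasDerivAt
      exact hf'.comp 0 hda
    have h2 : HasDerivAt (moeb b) ((1 - (starRingEnd ℂ) b * b)⁻¹) ((f ∘ moeb (-a)) 0) := by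
      simpa [Function.comp, hm0] using hdb
    have := h2.comp 0 h1
    simpa [mul_assoc] using this
  have hlt : ‖deriv F 0‖ ≤ 1 := by
    have := Complex.norm_deriv_le_div_of_mapsTo_ball hFd (by rw [hF0]; exact hFm.mono_right ball_subset_closedBall) one_pos
    simpa using this
  rw [hFa.deriv] at hlt
  have hcb : (1 : ℂ) - (starRingEnd ℂ) b * b = ((1 - ‖b‖ ^ 2 : ℝ) : ℂ) := by
    rw [Complex.conj_mul']
    push_cast
    rfl
  have hca : (1 : ℂ) - (starRingEnd ℂ) a * a = ((1 - ‖a‖ ^ 2 : ℝ) : ℂ) := by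
    rw [Complex.conj_mul']
    push_cast
    rfl
  have hbpos : (0:ℝ) < 1 - ‖b‖ ^ 2 := by nlinarith [norm_nonneg b]
  have hapos : (0:ℝ) < 1 - ‖a‖ ^ 2 := by nlinarith [norm_nonneg a]
  rw [hcb, hca] at hlt
  rw [norm_mul, norm_mul, norm_inv, Complex.norm_real, Complex.norm_real,
    Real.norm_of_nonneg hbpos.le, Real.norm_of_nonneg hapos.le] at hlt
  have heq : ‖deriv f a‖ * (1 - ‖a‖ ^ 2) / (1 - ‖b‖ ^ 2)
      = (1 - ‖b‖ ^ 2)⁻¹ * ‖deriv f a‖ * (1 - ‖a‖ ^ 2) := by ring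
  have hlt' : ‖deriv f a‖ * (1 - ‖a‖ ^ 2) / (1 - ‖b‖ ^ 2) ≤ 1 := by rw [heq]; exact hlt
  have := (div_le_one hbpos).mp hlt'
  exact this

end Aux

/-- Curvature bound on the unit disk: with `ω = g'/h'`, `|ω| < 1`, `ω = q²`,
the Gauss curvature `K = −|ω'|²/(|h'g'|(1+|ω|)⁴)` satisfies
`|K(z)| ≤ 4/((1−|z|²)²(|h'(z)|+|g'(z)|)²)`. -/
theorem curvature_bound_disk
    (D : Set ℂ) (hD : D = Metric.ball (0 : ℂ) 1)
    (h g q : ℂ → ℂ) (ω : ℂ → ℂ)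
    (hh : DifferentiableOn ℂ h D) (hg : DifferentiableOn ℂ g D)
    (hh0 : ∀ z ∈ D, deriv h z ≠ 0)
    (hω : ∀ z ∈ D, ω z = deriv g z / deriv h z)
    (hω1 : ∀ z ∈ D, ‖ω z‖ < 1)
    (hqdiff : DifferentiableOn ℂ q D)
    (hqsq : ∀ z ∈ D, q z ^ 2 = ω z)
    (K : ℂ → ℝ)
    (hK : ∀ z ∈ D, K z = -(‖deriv ω z‖ ^ 2) /
      (‖deriv h z * deriv g z‖ * (1 + ‖ω z‖) ^ 4)) :
    ∀ z ∈ D, |K z| ≤ 4 / ((1 - ‖z‖ ^ 2) ^ 2 * (‖deriv h z‖ + ‖deriv g z‖) ^ 2) := by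
  subst hD
  intro z hz
  have hz1 : ‖z‖ < 1 := mem_ball_zero_iff.1 hz
  set A := ‖deriv h z‖ with hA
  set Q := ‖q z‖ with hQ
  set P := ‖deriv q z‖ with hP
  have hA0 : 0 < A := norm_pos_iff.2 (hh0 z hz)
  have hωn : ‖ω z‖ = Q ^ 2 := by rw [← hqsq z hz, norm_pow]
  have hQ1 : Q < 1 := by
    have := hωn ▸ hω1 z hz
    nlinarith [norm_nonneg (q z)]
  -- q maps the disk to the disk
  have hqm : Set.MapsTo q (Metric.ball (0:ℂ) 1) (Metric.ball (0:ℂ) 1) := by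
    intro w hw
    rw [mem_ball_zero_iff]
    have h1 : ‖q w‖ ^ 2 < 1 := by rw [← norm_pow, hqsq w hw]; exact hω1 w hw
    nlinarith [norm_nonneg (q w)]
  have hSP : P * (1 - ‖z‖ ^ 2) ≤ 1 - Q ^ 2 := schwarzPick hqdiff hqm hz
  -- deriv g
  have hgz : deriv g z = ω z * deriv h z := by
    rw [hω z hz, div_mul_cancel₀ _ (hh0 z hz)]
  have hgn : ‖deriv g z‖ = Q ^ 2 * A := by rw [hgz, norm_mul, hωn]
  -- deriv ω
  have hqat : DifferentiableAt ℂ q z := hqdiff.differentiableAt (Metric.isOpen_ball.mem_nhds hz)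
  have hωderiv : deriv ω z = 2 * q z * deriv q z := by
    have hev : (fun w => q w ^ 2) =ᶠ[nhds z] ω :=
      Filter.eventually_of_mem (Metric.isOpen_ball.mem_nhds hz) (fun w hw => hqsq w hw)
    rw [← hev.deriv_eq]
    have := (hqat.hasDerivAt.pow 2).deriv
    rw [show (fun w => q w ^ 2) = q ^ 2 from rfl, this]
    norm_num
  have hωdn : ‖deriv ω z‖ = 2 * Q * P := by
    rw [hωderiv, norm_mul, norm_mul, hQ, hP]
    norm_num
  have hKz : K z = -((2 * Q * P) ^ 2) / ((A * (Q ^ 2 * A)) * (1 + Q ^ 2) ^ 4) := by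
    rw [hK z hz, hωdn, norm_mul, ← hA, hgn, hωn]
  by_cases hQ0 : Q = 0
  · rw [hKz, hQ0]
    norm_num
    positivity
  · have hQpos : 0 < Q := lt_of_le_of_ne (norm_nonneg _) (Ne.symm hQ0)
    have hden : 0 < (A * (Q ^ 2 * A)) * (1 + Q ^ 2) ^ 4 := by positivity
    have habs : |K z| = 4 * P ^ 2 / (A ^ 2 * (1 + Q ^ 2) ^ 4) := by
      rw [hKz, neg_div, abs_neg, abs_div, _root_.abs_of_nonneg (by positivity : (0:ℝ) ≤ (2*Q*P)^2),
        _root_.abs_of_pos hden]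
      rw [div_eq_div_iff hden.ne' (by positivity)]
      ring
    rw [habs, hgn]
    have hrhs : (1 - ‖z‖ ^ 2) ^ 2 * (A + Q ^ 2 * A) ^ 2 = (1 - ‖z‖ ^ 2) ^ 2 * A ^ 2 * (1 + Q ^ 2) ^ 2 := by
      ring
    rw [hrhs]
    have hz2 : 0 < 1 - ‖z‖ ^ 2 := by nlinarith [norm_nonneg z]
    rw [div_le_div_iff₀ (by positivity) (by positivity)]
    have key : P * (1 - ‖z‖ ^ 2) ≤ 1 + Q ^ 2 := by nlinarith
    have key2 : (P * (1 - ‖z‖ ^ 2)) * (P * (1 - ‖z‖ ^ 2)) ≤ (1 + Q ^ 2) * (1 + Q ^ 2) :=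
      mul_le_mul key key (by positivity) (by positivity)
    nlinarith [sq_nonneg A, sq_nonneg (1 + Q ^ 2), mul_pos (mul_pos hz2 hz2) (mul_pos hA0 hA0)]
end

section
/- Let m(z) = (1 + iπ + z² − 2 Log z)/(4i), h = (m + z)/2, g = (m − z)/2 on the upper half-plane U. Then the harmonic map f = h + conj(g) satisfies f(x + iy) = (1/2)(xy + arctan(x/y)) + iy for z = x + iy ∈ U, and f maps U bijectively onto U. -/
set_option autoImplicit false
open Complex Set

private lemma arctan_eq_aux (x y : ℝ) (hy : 0 < y) :
    Real.arctan (x / y) = Real.pi / 2 - Complex.arg ((x : ℂ) + y * Complex.I) := by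
  set z : ℂ := (x : ℂ) + y * I with hz
  have him : z.im = y := by simp [hz]
  have hre : z.re = x := by simp [hz]
  have hz0 : z ≠ 0 := by
    intro h; rw [h] at him; simp at him; linarith
  have h0 : 0 < arg z := by
    rcases lt_or_eq_of_le (Complex.arg_nonneg_iff.2 (by rw [him]; positivity)) with h | h
    · exact h
    · exfalso
      have := (Complex.arg_eq_zero_iff.1 h.symm).2
      rw [him] at this; linarith
  have h1 : arg z < Real.pi := by
    rcases lt_or_eq_of_le (Complex.arg_le_pi z) with h | h
    · exact h
    · exfalso
      have := (Complex.arg_eq_pi_iff.1 h).2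
      rw [him] at this; linarith
  have hxy : x / y = Real.tan (Real.pi / 2 - arg z) := by
    rw [Real.tan_pi_div_two_sub, Real.tan_eq_sin_div_cos, inv_div,
      Complex.cos_arg hz0, Complex.sin_arg, hre, him]
    have : ‖z‖ ≠ 0 := norm_ne_zero_iff.mpr hz0
    field_simp
  rw [hxy, Real.arctan_tan (by linarith) (by linarith)]

private lemma psi_aux (y : ℝ) (hy : 0 < y) :
    Function.Surjective (fun x : ℝ => (1/2) * (x * y + Real.arctan (x / y))) ∧
    StrictMono (fun x : ℝ => (1/2) * (x * y + Real.arctan (x / y))) := by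
  constructor
  · apply Continuous.surjective
    · exact continuous_const.mul ((continuous_id.mul continuous_const).add
        (Real.continuous_arctan.comp (continuous_id.div_const y)))
    · apply Filter.Tendsto.const_mul_atTop (by norm_num : (0:ℝ) < 1/2)
      apply Filter.tendsto_atTop_add_right_of_le' _ (-(Real.pi/2))
      · exact Filter.tendsto_id.atTop_mul_const hy
      · exact Filter.Eventually.of_forall fun x => (Real.neg_pi_div_two_lt_arctan _).le
    · apply Filter.Tendsto.const_mul_atBot (by norm_num : (0:ℝ) < 1/2)
      apply Filter.tendsto_atBot_add_right_of_ge' _ (Real.pi/2)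
      · exact Filter.tendsto_id.atBot_mul_const hy
      · exact Filter.Eventually.of_forall fun x => (Real.arctan_lt_pi_div_two _).le
  · have h1 : StrictMono fun x : ℝ => x * y + Real.arctan (x / y) := by
      apply StrictMono.add
      · exact fun a b hab => mul_lt_mul_of_pos_right hab hy
      · exact Real.arctan_strictMono.comp fun a b hab => div_lt_div_of_pos_right hab hy
    exact fun a b hab => mul_lt_mul_of_pos_left (h1 hab) (by norm_num)

/-- The harmonic map `f = h + conj g` built from
`m(z) = (1 + iπ + z² − 2 Log z)/(4i)` satisfies
`f(x+iy) = (1/2)(xy + arctan(x/y)) + iy` on the upper half-plane, and maps the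
upper half-plane bijectively onto itself. -/
theorem extremal_map_formula_and_bijectivity
    (U : Set ℂ) (hU : U = {z : ℂ | 0 < z.im})
    (m h g f : ℂ → ℂ)
    (hm : ∀ z : ℂ, m z =
      (1 + Complex.I * Real.pi + z ^ 2 - 2 * Complex.log z) / (4 * Complex.I))
    (hh : ∀ z : ℂ, h z = (m z + z) / 2)
    (hg : ∀ z : ℂ, g z = (m z - z) / 2)
    (hf : ∀ z : ℂ, f z = h z + (starRingEnd ℂ) (g z)) :
    (∀ x y : ℝ, 0 < y →
      f ((x : ℂ) + (y : ℂ) * Complex.I) =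
        (((1 / 2) * (x * y + Real.arctan (x / y)) : ℝ) : ℂ) +
          (y : ℂ) * Complex.I) ∧
      Set.BijOn f U U := by
  have key : ∀ x y : ℝ, 0 < y →
      f ((x : ℂ) + (y : ℂ) * Complex.I) =
        (((1 / 2) * (x * y + Real.arctan (x / y)) : ℝ) : ℂ) +
          (y : ℂ) * Complex.I := by
    intro x y hy
    set z : ℂ := (x : ℂ) + y * I with hz
    have hM : m z + (starRingEnd ℂ) (m z) =
        ((( (Real.pi + 2*x*y - 2 * Complex.arg z) / 2 : ℝ)) : ℂ) := by
      rw [hm, Complex.ext_iff]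
      constructor <;>
      · simp [hz, Complex.div_re, Complex.div_im, Complex.normSq, Complex.add_re,
          Complex.add_im, Complex.mul_re, Complex.mul_im, Complex.log_re,
          Complex.log_im, pow_two]
        ring
    have hsplit : f z = (m z + (starRingEnd ℂ) (m z)) / 2 + (z - (starRingEnd ℂ) z) / 2 := by
      rw [hf, hh, hg]
      simp only [map_div₀, map_sub, map_ofNat]
      ring
    have hconj : z - (starRingEnd ℂ) z = 2 * (y : ℂ) * I := by
      rw [hz]
      rw [Complex.ext_iff]
      refine ⟨by simp, ?_⟩
      simp
      ring
    rw [hsplit, hM, hconj]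
    have hr : ((Real.pi + 2*x*y - 2 * Complex.arg z) / 2 : ℝ) / 2 =
        (1 / 2) * (x * y + Real.arctan (x / y)) := by
      rw [hz, arctan_eq_aux x y hy]
      ring
    have : (((Real.pi + 2*x*y - 2 * Complex.arg z) / 2 : ℝ) : ℂ) / 2 =
        (((1 / 2) * (x * y + Real.arctan (x / y)) : ℝ) : ℂ) := by
      rw [← hr]; push_cast; ring
    rw [this]; ring
  refine ⟨key, ?_, ?_, ?_⟩
  · intro z hz
    rw [hU] at hz ⊢
    have hz' : z = (z.re : ℂ) + (z.im : ℂ) * I := (Complex.re_add_im z).symm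
    rw [hz', key z.re z.im hz]
    simp only [Set.mem_setOf_eq, Complex.add_im, Complex.ofReal_im, Complex.mul_im,
      Complex.ofReal_re, Complex.I_im, Complex.I_re, mul_one, mul_zero]
    simpa using hz
  · intro z₁ h₁ z₂ h₂ hfz
    rw [hU] at h₁ h₂
    have e₁ : z₁ = (z₁.re : ℂ) + (z₁.im : ℂ) * I := (Complex.re_add_im z₁).symm
    have e₂ : z₂ = (z₂.re : ℂ) + (z₂.im : ℂ) * I := (Complex.re_add_im z₂).symm
    rw [e₁, key z₁.re z₁.im h₁, e₂, key z₂.re z₂.im h₂, Complex.ext_iff] at hfz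
    simp only [Complex.add_re, Complex.add_im, Complex.ofReal_re, Complex.ofReal_im,
      Complex.mul_re, Complex.mul_im, Complex.I_re, Complex.I_im, mul_zero, mul_one,
      zero_mul, add_zero, zero_add, sub_zero, zero_sub, neg_zero] at hfz
    obtain ⟨hre, him⟩ := hfz
    have hyim : z₁.im = z₂.im := him
    rw [hyim] at hre
    have := (psi_aux z₂.im h₂).2.injective hre
    exact Complex.ext this hyim
  · intro w hw
    rw [hU] at hw
    obtain ⟨x, hx⟩ := (psi_aux w.im hw).1 w.re
    refine ⟨(x : ℂ) + (w.im : ℂ) * I, ?_, ?_⟩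
    · rw [hU]
      simp only [Set.mem_setOf_eq, Complex.add_im, Complex.ofReal_im, Complex.mul_im,
        Complex.ofReal_re, Complex.I_im, Complex.I_re, mul_one, mul_zero]
      simpa using hw
    · rw [key x w.im hw]
      simp only at hx
      rw [hx]
      exact Complex.re_add_im w
end

section
/- Let p be holomorphic and nonvanishing on the upper half-plane U and q holomorphic with |q| < 1 on U, and suppose the Weierstrass–Enneper data satisfy |p(i)|(1 + |q(i)|²) ≥ 1 (the Heinz bound at i). Then the Gauss curvature K(i) = −4|q'(i)|²/(|p(i)|²(1 + |q(i)|²)⁴) satisfies |K(i)| ≤ 1. -/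
open Complex Set Metric

lemma one_sub_ne (w : ℂ) (hw : ‖w‖ < 1) : (1 : ℂ) - w ≠ 0 := by
  intro h
  rw [sub_eq_zero] at h
  rw [← h] at hw
  simp at hw

lemma normSq_lt_one (w : ℂ) (hw : ‖w‖ < 1) : Complex.normSq w < 1 := by
  rw [Complex.normSq_eq_norm_sq]
  have : ‖w‖ < 1 := hw
  nlinarith [norm_nonneg w]

lemma cayley_mem (w : ℂ) (hw : ‖w‖ < 1) : 0 < (Complex.I * (1 + w) / (1 - w)).im := by
  have h0 := one_sub_ne w hw
  have h2 : 0 < Complex.normSq (1 - w) := Complex.normSq_pos.2 h0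
  have hns := normSq_lt_one w hw
  rw [Complex.div_im, div_sub_div _ _ (ne_of_gt h2) (ne_of_gt h2)]
  apply div_pos
  · simp only [Complex.normSq_apply, Complex.mul_im, Complex.mul_re, Complex.I_re, Complex.I_im,
      Complex.add_re, Complex.add_im, Complex.one_re, Complex.one_im, Complex.sub_re,
      Complex.sub_im] at *
    nlinarith
  · exact mul_pos h2 h2

lemma conj_mul_norm_lt (a b : ℂ) (ha : ‖a‖ < 1) (hb : ‖b‖ < 1) :
    ‖(starRingEnd ℂ) a * b‖ < 1 := by
  rw [norm_mul, RCLike.norm_conj]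
  nlinarith [norm_nonneg a, norm_nonneg b]

lemma moebius_lt (a b : ℂ) (ha : ‖a‖ < 1) (hb : ‖b‖ < 1) :
    ‖(b - a) / (1 - (starRingEnd ℂ) a * b)‖ < 1 := by
  have hden : (1 : ℂ) - (starRingEnd ℂ) a * b ≠ 0 := one_sub_ne _ (conj_mul_norm_lt a b ha hb)
  rw [norm_div, div_lt_one (norm_pos_iff.2 hden)]
  have key : Complex.normSq (1 - (starRingEnd ℂ) a * b) - Complex.normSq (b - a)
      = (1 - Complex.normSq a) * (1 - Complex.normSq b) := by
    simp only [Complex.normSq_apply, Complex.sub_re, Complex.sub_im, Complex.mul_re,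
      Complex.mul_im, Complex.conj_re, Complex.conj_im, Complex.one_re, Complex.one_im]
    ring
  have e1 : Complex.normSq (b - a) = ‖b - a‖ ^ 2 := (Complex.sq_norm _).symm
  have e2 : Complex.normSq (1 - (starRingEnd ℂ) a * b) = ‖1 - (starRingEnd ℂ) a * b‖ ^ 2 :=
    (Complex.sq_norm _).symm
  have h1 := normSq_lt_one a ha
  have h2 := normSq_lt_one b hb
  rw [e1, e2] at key
  nlinarith [norm_nonneg (b - a), norm_nonneg (1 - (starRingEnd ℂ) a * b)]

lemma schwarz_pick_i (q : ℂ → ℂ) (hq : DifferentiableOn ℂ q {z : ℂ | 0 < z.im})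
    (hq1 : ∀ z ∈ {z : ℂ | 0 < z.im}, ‖q z‖ < 1) :
    2 * ‖deriv q Complex.I‖ ≤ 1 - ‖q Complex.I‖ ^ 2 := by
  have hIU : Complex.I ∈ {z : ℂ | 0 < z.im} := by simp
  have hUopen : IsOpen {z : ℂ | 0 < z.im} := isOpen_lt continuous_const Complex.continuous_im
  set a : ℂ := q Complex.I with ha_def
  have ha : ‖a‖ < 1 := hq1 _ hIU
  set c : ℂ → ℂ := fun w => Complex.I * (1 + w) / (1 - w) with hc_def
  have hc0 : c 0 = Complex.I := by simp [hc_def]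
  set g : ℂ → ℂ := fun w => (q (c w) - a) / (1 - (starRingEnd ℂ) a * q (c w)) with hg_def
  -- c maps ball to U and is differentiable on ball
  have hball : ∀ w ∈ ball (0:ℂ) 1, ‖w‖ < 1 := by
    intro w hw; simpa [mem_ball, dist_eq_norm] using hw
  have hcmaps : MapsTo c (ball (0:ℂ) 1) {z : ℂ | 0 < z.im} := fun w hw =>
    cayley_mem w (hball w hw)
  have hcdiff : DifferentiableOn ℂ c (ball (0:ℂ) 1) := by
    apply DifferentiableOn.div
    · exact (differentiable_const _).differentiableOn.mul
        ((differentiable_const _).add differentiable_id).differentiableOn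
    · exact ((differentiable_const _).sub differentiable_id).differentiableOn
    · exact fun w hw => one_sub_ne w (hball w hw)
  have hqc : DifferentiableOn ℂ (fun w => q (c w)) (ball (0:ℂ) 1) := hq.comp hcdiff hcmaps
  have hqcball : ∀ w ∈ ball (0:ℂ) 1, ‖q (c w)‖ < 1 := fun w hw => hq1 _ (hcmaps hw)
  have hgdiff : DifferentiableOn ℂ g (ball (0:ℂ) 1) := by
    apply DifferentiableOn.div
    · exact hqc.sub (differentiableOn_const _)
    · exact (differentiableOn_const _).sub ((differentiableOn_const _).mul hqc)
    · exact fun w hw => one_sub_ne _ (conj_mul_norm_lt a _ ha (hqcball w hw))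
  have hg0 : g 0 = 0 := by simp [hg_def, hc0, ← ha_def]
  have hgmaps : MapsTo g (ball (0:ℂ) 1) (ball (g 0) 1) := by
    intro w hw
    rw [hg0, mem_ball, dist_eq_norm, sub_zero]
    exact moebius_lt a _ ha (hqcball w hw)
  have hschwarz : ‖deriv g 0‖ ≤ 1 := by
    have := Complex.norm_deriv_le_div_of_mapsTo_ball hgdiff (hgmaps.mono_right ball_subset_closedBall) one_pos
    simpa using this
  -- compute deriv g 0
  have hden_a : (1 : ℂ) - (starRingEnd ℂ) a * a ≠ 0 :=
    one_sub_ne _ (conj_mul_norm_lt a a ha ha)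
  have hDc : HasDerivAt c (2 * Complex.I) 0 := by
    have h1 : HasDerivAt (fun w : ℂ => Complex.I * (1 + w)) Complex.I 0 := by
      simpa using ((hasDerivAt_id (0:ℂ)).const_add 1).const_mul Complex.I
    have h2 : HasDerivAt (fun w : ℂ => 1 - w) (-1) 0 := by
      simpa using (hasDerivAt_id (0:ℂ)).const_sub 1
    have := h1.div h2 (by norm_num)
    refine this.congr_deriv ?_
    ring
  have hDq : HasDerivAt q (deriv q Complex.I) Complex.I :=
    (hq.differentiableAt (hUopen.mem_nhds hIU)).hasDerivAt
  have hDqc : HasDerivAt (fun w => q (c w)) (deriv q Complex.I * (2 * Complex.I)) 0 := by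
    have hDq' : HasDerivAt q (deriv q Complex.I) (c 0) := by rw [hc0]; exact hDq
    exact HasDerivAt.comp 0 hDq' hDc
  have hDg : HasDerivAt g ((1 - (starRingEnd ℂ) a * a)⁻¹ * (deriv q Complex.I * (2 * Complex.I)))
      0 := by
    have h1 : HasDerivAt (fun w => q (c w) - a) (deriv q Complex.I * (2 * Complex.I)) 0 :=
      hDqc.sub_const a
    have h2 : HasDerivAt (fun w => (1:ℂ) - (starRingEnd ℂ) a * q (c w))
        (-((starRingEnd ℂ) a * (deriv q Complex.I * (2 * Complex.I)))) 0 := by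
      simpa using (hDqc.const_mul ((starRingEnd ℂ) a)).const_sub 1
    have hne : (1 : ℂ) - (starRingEnd ℂ) a * q (c 0) ≠ 0 := by
      rw [hc0, ← ha_def]; exact hden_a
    have := h1.div h2 hne
    refine this.congr_deriv ?_
    rw [hc0, ← ha_def]
    field_simp
    ring
  have hderiv : deriv g 0 = (1 - (starRingEnd ℂ) a * a)⁻¹ *
      (deriv q Complex.I * (2 * Complex.I)) := hDg.deriv
  rw [hderiv] at hschwarz
  have hnorm1 : ‖(1 - (starRingEnd ℂ) a * a : ℂ)‖ = 1 - ‖a‖ ^ 2 := by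
    have : (starRingEnd ℂ) a * a = (Complex.normSq a : ℂ) := by
      rw [mul_comm, Complex.mul_conj]
    have hns : Complex.normSq a = ‖a‖ ^ 2 := by rw [Complex.normSq_eq_norm_sq]
    rw [this, ← Complex.ofReal_one, ← Complex.ofReal_sub, Complex.norm_real, hns,
      Real.norm_eq_abs]
    exact abs_of_nonneg (by nlinarith [norm_nonneg a])
  rw [norm_mul, norm_mul, norm_inv, hnorm1, norm_mul, Complex.norm_I] at hschwarz
  have hpos : 0 < 1 - ‖a‖ ^ 2 := by nlinarith [norm_nonneg a]
  rw [inv_mul_le_iff₀ hpos] at hschwarz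
  have h2n : ‖(2:ℂ)‖ = 2 := by norm_num
  rw [h2n] at hschwarz
  linarith [hschwarz]

set_option autoImplicit false
open Complex Set

/-- If the Weierstrass–Enneper data `p, q` on the upper half-plane satisfy the
Heinz bound `|p(i)|(1+|q(i)|²) ≥ 1`, then the Gauss curvature at `i`,
`K(i) = −4|q'(i)|²/(|p(i)|²(1+|q(i)|²)⁴)`, satisfies `|K(i)| ≤ 1`. -/
theorem curvature_at_i_le_one
    (U : Set ℂ) (hU : U = {z : ℂ | 0 < z.im})
    (p q : ℂ → ℂ)
    (hp : DifferentiableOn ℂ p U) (hp0 : ∀ z ∈ U, p z ≠ 0)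
    (hq : DifferentiableOn ℂ q U) (hq1 : ∀ z ∈ U, ‖q z‖ < 1)
    (hheinz : 1 ≤ ‖p Complex.I‖ * (1 + ‖q Complex.I‖ ^ 2)) :
    |(-(4 * ‖deriv q Complex.I‖ ^ 2) /
        (‖p Complex.I‖ ^ 2 * (1 + ‖q Complex.I‖ ^ 2) ^ 4))| ≤ 1 := by
  subst hU
  have hIU : Complex.I ∈ {z : ℂ | 0 < z.im} := by simp
  have hsp := schwarz_pick_i q hq hq1
  set x := ‖q Complex.I‖ with hx
  set d := ‖deriv q Complex.I‖ with hd
  set y := ‖p Complex.I‖ with hy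
  have hx1 : x < 1 := hq1 _ hIU
  have hx0 : 0 ≤ x := norm_nonneg _
  have hd0 : 0 ≤ d := norm_nonneg _
  have hy0 : 0 < y := norm_pos_iff.2 (hp0 _ hIU)
  have hdenpos : 0 < y ^ 2 * (1 + x ^ 2) ^ 4 := by positivity
  rw [abs_div, _root_.abs_of_nonneg hdenpos.le, abs_neg, _root_.abs_of_nonneg (by positivity : (0:ℝ) ≤ 4 * d ^ 2),
    div_le_one hdenpos]
  nlinarith [sq_nonneg (1 - x ^ 2), sq_nonneg x, mul_pos hy0 hy0,
    mul_le_mul hheinz hheinz (by linarith) (by positivity), sq_nonneg (y * (1 + x^2)^2 - 1),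
    sq_nonneg (2 * d)]
end
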